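/- For connected D-colored graphs R and Q with white vertices labelled by momenta that are colorwise pairwise distinct, the multiple source-derivative of the monomial J(R) with respect to J(Q), evaluated at J = J̄ = 0, equals the sum over automorphisms σ of R of the product of Kronecker deltas matching the σ-permuted momenta of R to those of Q when R ≅ Q, and vanishes identically when R ≇ Q. -/

import Mathlib

open scoped Classical

structure PreGraph (D : ℕ) where
  W : Type
  B : Type
  E : Type
  [finW : Finite W]
  [finB : Finite B]
  [finE : Finite E]
  src : E → W
  tgt : E → B
  col : E → Fin D

attribute [instance] PreGraph.finW PreGraph.finB PreGraph.finE

namespace PreGraph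

variable {D : ℕ}

/-- A regularly edge-colored bipartite graph: at every white (resp. black) vertex
there is exactly one incident edge of each of the `D` colors. -/
def Regular (G : PreGraph D) : Prop :=
  (∀ w c, ∃! e, G.src e = w ∧ G.col e = c) ∧
  (∀ b c, ∃! e, G.tgt e = b ∧ G.col e = c)

/-- The simple graph on all the vertices of `G` whose edges are the edges of `G`
with color in `S`. -/
def adjOn (G : PreGraph D) (S : Set (Fin D)) : SimpleGraph (G.W ⊕ G.B) where
  Adj v w := ∃ e, G.col e ∈ S ∧
    ((v = Sum.inl (G.src e) ∧ w = Sum.inr (G.tgt e)) ∨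
     (w = Sum.inl (G.src e) ∧ v = Sum.inr (G.tgt e)))
  symm := by
    constructor
    rintro v w ⟨e, hc, h⟩
    exact ⟨e, hc, h.symm⟩
  loopless := by
    constructor
    rintro v ⟨e, hc, (⟨h1, h2⟩ | ⟨h1, h2⟩)⟩ <;> rw [h1] at h2 <;> exact Sum.inl_ne_inr h2

def Connected (G : PreGraph D) : Prop := (G.adjOn Set.univ).Connected

/-- The number of faces (connected components of the `{i,j}`-bicolored subgraph). -/
noncomputable def facesCount (G : PreGraph D) (i j : Fin D) : ℕ :=
  Nat.card ((G.adjOn {i, j}).ConnectedComponent)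

/-- The total number of faces of `G` (over all unordered pairs of colors). -/
noncomputable def totalFaces (G : PreGraph D) : ℕ :=
  ∑ p ∈ Finset.univ.filter (fun p : Fin D × Fin D => p.1 < p.2), G.facesCount p.1 p.2

/-- Number of faces of the jacket associated to a cyclic permutation `σ` of the colors:
the faces of colors `σ^q(0), σ^{q+1}(0)`. -/
noncomputable def jacketFaces (G : PreGraph (D+1)) (σ : Equiv.Perm (Fin (D+1))) : ℕ :=
  ∑ q ∈ Finset.range (D+1), G.facesCount ((σ ^ q) 0) ((σ ^ (q+1)) 0)

/-- The genus of the jacket ribbon graph associated to `σ`, via Euler's formula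
`2 - 2g = V - E + F`. -/
noncomputable def jacketGenus (G : PreGraph (D+1)) (σ : Equiv.Perm (Fin (D+1))) : ℚ :=
  (2 - ((Nat.card G.W : ℚ) + (Nat.card G.B : ℚ)) + (Nat.card G.E : ℚ)
      - (G.jacketFaces σ : ℚ)) / 2

/-- Gurău's degree: the sum of the genera of the `D!/2` jackets of `G`; each jacket
corresponds to a pair `σ, σ⁻¹` of cyclic permutations of the `D+1` colors, whence the
factor `1/2`. -/
noncomputable def gurauDegree (G : PreGraph (D+1)) : ℚ :=
  (1/2) * ∑ σ ∈ Finset.univ.filter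
      (fun σ : Equiv.Perm (Fin (D+1)) => σ.IsCycle ∧ σ.support = Finset.univ),
    G.jacketGenus σ

end PreGraph

/-- The connected sum `G #_{e,f} K`: delete `e` and `f` and add two new edges
`E = (s(e), t(f))` (coded `true`) and `F = (s(f), t(e))` (coded `false`), both of the
color of `e`. -/
noncomputable def connSum {D : ℕ} (G K : PreGraph D) (e : G.E) (f : K.E) :
    PreGraph D where
  W := G.W ⊕ K.W
  B := G.B ⊕ K.B
  E := {e' : G.E // e' ≠ e} ⊕ ({f' : K.E // f' ≠ f} ⊕ Bool)
  src := fun x => match x with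
    | .inl e' => .inl (G.src e'.1)
    | .inr (.inl f') => .inr (K.src f'.1)
    | .inr (.inr true) => .inl (G.src e)
    | .inr (.inr false) => .inr (K.src f)
  tgt := fun x => match x with
    | .inl e' => .inl (G.tgt e'.1)
    | .inr (.inl f') => .inr (K.tgt f'.1)
    | .inr (.inr true) => .inr (K.tgt f)
    | .inr (.inr false) => .inl (G.tgt e)
  col := fun x => match x with
    | .inl e' => G.col e'.1
    | .inr (.inl f') => K.col f'.1
    | .inr (.inr _) => G.col e

/-- An automorphism of a colored graph: permutations of white vertices, black vertices
and edges preserving the bipartition, the edge colors and the incidence relations. -/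
structure PreGraph.Aut {D : ℕ} (G : PreGraph D) where
  w : Equiv.Perm G.W
  b : Equiv.Perm G.B
  e : Equiv.Perm G.E
  hsrc : ∀ x, G.src (e x) = w (G.src x)
  htgt : ∀ x, G.tgt (e x) = b (G.tgt x)
  hcol : ∀ x, G.col (e x) = G.col x

/-- An isomorphism of colored graphs. -/
structure PreGraph.Iso {D : ℕ} (G H : PreGraph D) where
  w : G.W ≃ H.W
  b : G.B ≃ H.B
  e : G.E ≃ H.E
  hsrc : ∀ x, H.src (e x) = w (G.src x)
  htgt : ∀ x, H.tgt (e x) = b (G.tgt x)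
  hcol : ∀ x, H.col (e x) = G.col x

/-- The momentum carried by a black vertex `b` of a regular `D`-colored graph whose
white vertices carry the momenta `x`: its `i`-th component is the `i`-th component of
the momentum at the white vertex joined to `b` by the (unique) `i`-colored edge. -/
noncomputable def blackMom {D : ℕ} (G : PreGraph D) (hreg : G.Regular)
    (x : G.W → Fin D → ℤ) (b : G.B) : Fin D → ℤ :=
  fun i => x (G.src (hreg.2 b i).exists.choose) i

/-- The source monomial `𝕁(G)(x) = ∏_w J_{x(w)} · ∏_b J̄_{p(b)}` attached to a labelled
`D`-colored graph, as a polynomial in the commuting variables `J_v` (`Sum.inl v`) and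
`J̄_v` (`Sum.inr v`), `v ∈ ℤ^D`. -/
noncomputable def Jmon {D : ℕ} (G : PreGraph D) (hreg : G.Regular)
    (x : G.W → Fin D → ℤ) : MvPolynomial ((Fin D → ℤ) ⊕ (Fin D → ℤ)) ℚ :=
  (∏ᶠ w : G.W, MvPolynomial.X (Sum.inl (x w))) *
    ∏ᶠ b : G.B, MvPolynomial.X (Sum.inr (blackMom G hreg x b))

/-- The exponent (multidegree) of the source monomial `𝕁(G)(x)`. -/
noncomputable def Jexp {D : ℕ} (G : PreGraph D) (hreg : G.Regular)
    (x : G.W → Fin D → ℤ) : ((Fin D → ℤ) ⊕ (Fin D → ℤ)) →₀ ℕ :=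
  (∑ᶠ w : G.W, Finsupp.single (Sum.inl (x w)) 1) +
    ∑ᶠ b : G.B, Finsupp.single (Sum.inr (blackMom G hreg x b)) 1

section Helpers

variable {D : ℕ}

lemma prod_X_eq_monomial' {σ : Type*} {ι : Type*} (s : Finset ι) (f : ι → σ) :
    (∏ i ∈ s, (MvPolynomial.X (f i) : MvPolynomial σ ℚ)) =
      MvPolynomial.monomial (∑ i ∈ s, Finsupp.single (f i) 1) 1 := by
  classical
  induction s using Finset.induction_on with
  | empty => simp
  | @insert a s ha ih =>
    rw [Finset.prod_insert ha, Finset.sum_insert ha, ih,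
      ← pow_one (MvPolynomial.X (f a) : MvPolynomial σ ℚ),
      MvPolynomial.X_pow_eq_monomial, MvPolynomial.monomial_mul, one_mul]

lemma Jmon_eq (G : PreGraph D) (hG : G.Regular) (x : G.W → Fin D → ℤ) :
    Jmon G hG x = MvPolynomial.monomial (Jexp G hG x) 1 := by
  classical
  haveI := Fintype.ofFinite G.W
  haveI := Fintype.ofFinite G.B
  rw [Jmon, Jexp, finprod_eq_prod_of_fintype, finprod_eq_prod_of_fintype,
    finsum_eq_sum_of_fintype, finsum_eq_sum_of_fintype,
    prod_X_eq_monomial', prod_X_eq_monomial', MvPolynomial.monomial_mul, one_mul]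

lemma Jexp_ne_zero_inl (G : PreGraph D) (hG : G.Regular) (x : G.W → Fin D → ℤ)
    (v : Fin D → ℤ) : Jexp G hG x (Sum.inl v) ≠ 0 ↔ ∃ w, x w = v := by
  classical
  haveI := Fintype.ofFinite G.W
  haveI := Fintype.ofFinite G.B
  rw [Jexp, finsum_eq_sum_of_fintype, finsum_eq_sum_of_fintype, Finsupp.add_apply,
    Finsupp.finset_sum_apply, Finsupp.finset_sum_apply]
  simp [Finsupp.single_apply, Finset.sum_eq_zero_iff, eq_comm,
    Finset.card_eq_zero, Finset.filter_eq_empty_iff]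
  constructor
  · intro h
    obtain ⟨w, hw⟩ := Finset.card_pos.mp (Nat.pos_of_ne_zero fun h0 => h h0.symm)
    exact ⟨w, (Finset.mem_filter.mp hw).2⟩
  · rintro ⟨w, hw⟩ h
    have h0 := Finset.card_eq_zero.mp h.symm
    rw [Finset.filter_eq_empty_iff] at h0
    exact h0 (Finset.mem_univ w) hw

lemma Jexp_ne_zero_inr (G : PreGraph D) (hG : G.Regular) (x : G.W → Fin D → ℤ)
    (v : Fin D → ℤ) : Jexp G hG x (Sum.inr v) ≠ 0 ↔ ∃ b, blackMom G hG x b = v := by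
  classical
  haveI := Fintype.ofFinite G.W
  haveI := Fintype.ofFinite G.B
  rw [Jexp, finsum_eq_sum_of_fintype, finsum_eq_sum_of_fintype, Finsupp.add_apply,
    Finsupp.finset_sum_apply, Finsupp.finset_sum_apply]
  simp [Finsupp.single_apply, Finset.sum_eq_zero_iff, eq_comm,
    Finset.card_eq_zero, Finset.filter_eq_empty_iff]
  constructor
  · intro h
    obtain ⟨w, hw⟩ := Finset.card_pos.mp (Nat.pos_of_ne_zero fun h0 => h h0.symm)
    exact ⟨w, (Finset.mem_filter.mp hw).2⟩
  · rintro ⟨w, hw⟩ h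
    have h0 := Finset.card_eq_zero.mp h.symm
    rw [Finset.filter_eq_empty_iff] at h0
    exact h0 (Finset.mem_univ w) hw

noncomputable def matchEquiv {A B Z : Type*} (x : A → Z) (y : B → Z)
    (hx : Function.Injective x) (hy : Function.Injective y)
    (h1 : ∀ a, ∃ b, y b = x a) (h2 : ∀ b, ∃ a, x a = y b) :
    {e : A ≃ B // ∀ a, y (e a) = x a} := by
  refine ⟨⟨fun a => (h1 a).choose, fun b => (h2 b).choose, ?_, ?_⟩,
    fun a => (h1 a).choose_spec⟩
  · intro a; apply hx; rw [(h2 _).choose_spec, (h1 a).choose_spec]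
  · intro b; apply hy; rw [(h1 _).choose_spec, (h2 b).choose_spec]

lemma subsingleton_of_connected_zero (G : PreGraph 0) (h : G.Connected) :
    Subsingleton (G.W ⊕ G.B) := by
  haveI : IsEmpty G.E := ⟨fun e => (G.col e).elim0⟩
  constructor
  intro v v'
  obtain ⟨p⟩ := h.preconnected v v'
  cases p with
  | nil => rfl
  | cons h' _ => obtain ⟨e, -, -⟩ := h'; exact isEmptyElim e

lemma white_subsing (G : PreGraph 0) (h : G.Connected) : Subsingleton G.W :=
  ⟨fun a b => Sum.inl_injective ((subsingleton_of_connected_zero G h).allEq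
    (Sum.inl a) (Sum.inl b))⟩

lemma black_subsing (G : PreGraph 0) (h : G.Connected) : Subsingleton G.B :=
  ⟨fun a b => Sum.inr_injective ((subsingleton_of_connected_zero G h).allEq
    (Sum.inr a) (Sum.inr b))⟩

lemma white_inj (G : PreGraph D) (hGc : G.Connected) (x : G.W → Fin D → ℤ)
    (hx : ∀ w w', w ≠ w' → ∀ i, x w i ≠ x w' i) : Function.Injective x := by
  intro w w' h
  by_contra hne
  cases D with
  | zero => exact hne ((white_subsing G hGc).allEq w w')
  | succ n => exact hx w w' hne 0 (congrFun h 0)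

lemma black_inj (G : PreGraph D) (hG : G.Regular) (hGc : G.Connected)
    (x : G.W → Fin D → ℤ)
    (hx : ∀ w w', w ≠ w' → ∀ i, x w i ≠ x w' i) :
    Function.Injective (blackMom G hG x) := by
  intro b b' h
  cases D with
  | zero => exact (black_subsing G hGc).allEq b b'
  | succ n =>
    have hsp := (hG.2 b 0).exists.choose_spec
    have hsp' := (hG.2 b' 0).exists.choose_spec
    have h0 : x (G.src (hG.2 b 0).exists.choose) 0
        = x (G.src (hG.2 b' 0).exists.choose) 0 := congrFun h 0
    have hw : G.src (hG.2 b 0).exists.choose = G.src (hG.2 b' 0).exists.choose := by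
      by_contra hne
      exact hx _ _ hne 0 h0
    have he : (hG.2 b 0).exists.choose = (hG.2 b' 0).exists.choose :=
      (hG.1 (G.src (hG.2 b 0).exists.choose) 0).unique ⟨rfl, hsp.2⟩ ⟨hw.symm, hsp'.2⟩
    rw [← hsp.1, ← hsp'.1, he]

lemma iso_of_jexp_eq (G H : PreGraph D) (hG : G.Regular) (hH : H.Regular)
    (hGc : G.Connected) (hHc : H.Connected)
    (x : G.W → Fin D → ℤ) (y : H.W → Fin D → ℤ)
    (hx : ∀ w w', w ≠ w' → ∀ i, x w i ≠ x w' i)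
    (hy : ∀ w w', w ≠ w' → ∀ i, y w i ≠ y w' i)
    (heq : Jexp G hG x = Jexp H hH y) :
    ∃ I : G.Iso H, ∀ w, y (I.w w) = x w := by
  have h1 : ∀ w, ∃ w', y w' = x w := by
    intro w
    refine (Jexp_ne_zero_inl H hH y _).1 ?_
    rw [← heq, Jexp_ne_zero_inl]
    exact ⟨w, rfl⟩
  have h2 : ∀ w', ∃ w, x w = y w' := by
    intro w'
    refine (Jexp_ne_zero_inl G hG x _).1 ?_
    rw [heq, Jexp_ne_zero_inl]
    exact ⟨w', rfl⟩
  obtain ⟨φ, hφ⟩ := matchEquiv x y (white_inj G hGc x hx) (white_inj H hHc y hy) h1 h2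
  have hb1 : ∀ b, ∃ b', blackMom H hH y b' = blackMom G hG x b := by
    intro b
    refine (Jexp_ne_zero_inr H hH y _).1 ?_
    rw [← heq, Jexp_ne_zero_inr]
    exact ⟨b, rfl⟩
  have hb2 : ∀ b', ∃ b, blackMom G hG x b = blackMom H hH y b' := by
    intro b'
    refine (Jexp_ne_zero_inr G hG x _).1 ?_
    rw [heq, Jexp_ne_zero_inr]
    exact ⟨b', rfl⟩
  obtain ⟨ψ, hψ⟩ := matchEquiv _ _ (black_inj G hG hGc x hx) (black_inj H hH hHc y hy)
    hb1 hb2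
  set f : G.E → H.E := fun e => (hH.2 (ψ (G.tgt e)) (G.col e)).exists.choose with hf
  have hft : ∀ e, H.tgt (f e) = ψ (G.tgt e) :=
    fun e => ((hH.2 (ψ (G.tgt e)) (G.col e)).exists.choose_spec).1
  have hfc : ∀ e, H.col (f e) = G.col e :=
    fun e => ((hH.2 (ψ (G.tgt e)) (G.col e)).exists.choose_spec).2
  have key : ∀ e : G.E, H.src (f e) = φ (G.src e) := by
    intro e
    have hee : (hG.2 (G.tgt e) (G.col e)).exists.choose = e :=
      (hG.2 (G.tgt e) (G.col e)).unique
        (hG.2 (G.tgt e) (G.col e)).exists.choose_spec ⟨rfl, rfl⟩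
    have hbmi : blackMom G hG x (G.tgt e) (G.col e) = x (G.src e) (G.col e) := by
      simp only [blackMom]
      rw [hee]
    have hyy : y (H.src (f e)) (G.col e) = y (φ (G.src e)) (G.col e) := by
      have h3 : y (H.src (f e)) (G.col e)
          = blackMom H hH y (ψ (G.tgt e)) (G.col e) := rfl
      rw [h3, hψ, hbmi, hφ]
    by_contra hne
    exact hy _ _ hne (G.col e) hyy
  have hfinj : Function.Injective f := by
    intro e e' h
    have h1' : ψ (G.tgt e) = ψ (G.tgt e') := by rw [← hft e, ← hft e', h]
    have ht : G.tgt e = G.tgt e' := ψ.injective h1'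
    have hcc : G.col e = G.col e' := by rw [← hfc e, ← hfc e', h]
    exact (hG.2 (G.tgt e) (G.col e)).unique ⟨rfl, rfl⟩ ⟨ht.symm, hcc.symm⟩
  have hfsurj : Function.Surjective f := by
    intro f0
    obtain ⟨e₀, he₀⟩ := (hG.2 (ψ.symm (H.tgt f0)) (H.col f0)).exists
    refine ⟨e₀, ?_⟩
    refine (hH.2 (H.tgt f0) (H.col f0)).unique ?_ ⟨rfl, rfl⟩
    constructor
    · rw [hft, he₀.1, Equiv.apply_symm_apply]
    · rw [hfc, he₀.2]
  refine ⟨⟨φ, ψ, Equiv.ofBijective f ⟨hfinj, hfsurj⟩, key, hft, hfc⟩, hφ⟩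

lemma autExt {G : PreGraph D} {Θ Θ' : G.Aut} (hw : Θ.w = Θ'.w) (hb : Θ.b = Θ'.b)
    (he : Θ.e = Θ'.e) : Θ = Θ' := by
  obtain ⟨w1, b1, e1, _, _, _⟩ := Θ
  obtain ⟨w2, b2, e2, _, _, _⟩ := Θ'
  dsimp at hw hb he
  subst hw hb he
  rfl

lemma aut_subsingleton (R : PreGraph D) (hR : R.Regular) (hRc : R.Connected)
    (c : R.W → Fin D → ℤ)
    (hc : ∀ w w', w ≠ w' → ∀ i, c w i ≠ c w' i) (a₂ : R.W → Fin D → ℤ) :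
    Subsingleton {Θ : R.Aut // ∀ w, c (Θ.w w) = a₂ w} := by
  constructor
  rintro ⟨Θ, hΘ⟩ ⟨Θ', hΘ'⟩
  have hcInj := white_inj R hRc c hc
  have hw : Θ.w = Θ'.w := Equiv.ext fun w => hcInj ((hΘ w).trans (hΘ' w).symm)
  have he : Θ.e = Θ'.e := by
    refine Equiv.ext fun e => ?_
    refine (hR.1 (Θ.w (R.src e)) (R.col e)).unique ⟨Θ.hsrc e, Θ.hcol e⟩ ?_
    exact ⟨by rw [Θ'.hsrc, ← hw], Θ'.hcol e⟩
  have hb : Θ.b = Θ'.b := by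
    cases D with
    | zero => exact Equiv.ext fun b => (black_subsing R hRc).allEq _ _
    | succ n =>
      refine Equiv.ext fun b => ?_
      obtain ⟨e, he0, -⟩ := (hR.2 b 0).exists
      rw [← he0, ← Θ.htgt, ← Θ'.htgt, he]
  exact Subtype.ext (autExt hw hb he)

lemma blackMom_comp (R : PreGraph D) (hR : R.Regular) (c : R.W → Fin D → ℤ)
    (Θ : R.Aut) (b : R.B) :
    blackMom R hR (fun w => c (Θ.w w)) b = blackMom R hR c (Θ.b b) := by
  funext i
  have hsp := (hR.2 b i).exists.choose_spec
  have h1 : R.tgt (Θ.e (hR.2 b i).exists.choose) = Θ.b b ∧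
      R.col (Θ.e (hR.2 b i).exists.choose) = i :=
    ⟨by rw [Θ.htgt, hsp.1], by rw [Θ.hcol, hsp.2]⟩
  have h2 := (hR.2 (Θ.b b) i).exists.choose_spec
  have h3 : Θ.e (hR.2 b i).exists.choose = (hR.2 (Θ.b b) i).exists.choose :=
    (hR.2 (Θ.b b) i).unique h1 h2
  show c (Θ.w (R.src (hR.2 b i).exists.choose)) i
    = c (R.src (hR.2 (Θ.b b) i).exists.choose) i
  rw [← h3, Θ.hsrc]

lemma Jexp_relabel (R : PreGraph D) (hR : R.Regular) (c : R.W → Fin D → ℤ)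
    (Θ : R.Aut) : Jexp R hR (fun w => c (Θ.w w)) = Jexp R hR c := by
  rw [Jexp, Jexp]
  congr 1
  · exact finsum_comp_equiv Θ.w (f := fun w => Finsupp.single (Sum.inl (c w)) 1)
  · simp only [blackMom_comp R hR c Θ]
    exact finsum_comp_equiv Θ.b
      (f := fun b => Finsupp.single (Sum.inr (blackMom R hR c b)) 1)

end Helpers

/-- Graph calculus: for connected regular `D`-colored graphs `R`, `Q`
with colorwise pairwise distinct white momenta, the multiple source-derivative of the
monomial `𝕁(R)` with respect to `𝕁(Q)` at `J = J̄ = 0` — i.e. the coefficient of the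
(multilinear) monomial of `Q` in the monomial of `R` — vanishes when `R ≇ Q`, and for
`R = Q` it equals the number of automorphisms of `R` matching the two labelings
(the sum over `Aut_c(R)` of the products of Kronecker deltas). -/
theorem graph_calculus (D : ℕ) (R Q : PreGraph D)
    (hR : R.Regular) (hQ : Q.Regular) (hRc : R.Connected) (hQc : Q.Connected)
    (c : R.W → Fin D → ℤ) (a : Q.W → Fin D → ℤ)
    (hc : ∀ w w', w ≠ w' → ∀ i, c w i ≠ c w' i)
    (ha : ∀ w w', w ≠ w' → ∀ i, a w i ≠ a w' i) :
    (IsEmpty (R.Iso Q) → MvPolynomial.coeff (Jexp Q hQ a) (Jmon R hR c) = 0) ∧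
    (∀ a₂ : R.W → Fin D → ℤ, (∀ w w', w ≠ w' → ∀ i, a₂ w i ≠ a₂ w' i) →
      MvPolynomial.coeff (Jexp R hR a₂) (Jmon R hR c) =
        (Nat.card {Θ : R.Aut // ∀ w, c (Θ.w w) = a₂ w} : ℚ)) := by
  constructor
  · intro hiso
    rw [Jmon_eq, MvPolynomial.coeff_monomial, if_neg]
    intro heq
    obtain ⟨I, -⟩ := iso_of_jexp_eq R Q hR hQ hRc hQc c a hc ha heq
    exact hiso.false I
  · intro a₂ ha₂
    rw [Jmon_eq, MvPolynomial.coeff_monomial]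
    by_cases heq : Jexp R hR c = Jexp R hR a₂
    · rw [if_pos heq]
      have hne : Nonempty {Θ : R.Aut // ∀ w, c (Θ.w w) = a₂ w} := by
        obtain ⟨I, hI⟩ := iso_of_jexp_eq R R hR hR hRc hRc a₂ c ha₂ hc heq.symm
        exact ⟨⟨⟨I.w, I.b, I.e, I.hsrc, I.htgt, I.hcol⟩, hI⟩⟩
      have hsub := aut_subsingleton R hR hRc c hc a₂
      rw [Nat.card_eq_one_iff_unique.mpr ⟨hsub, hne⟩]
      norm_num
    · rw [if_neg heq]
      have hem : IsEmpty {Θ : R.Aut // ∀ w, c (Θ.w w) = a₂ w} := by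
        constructor
        rintro ⟨Θ, hΘ⟩
        apply heq
        have ha2 : a₂ = fun w => c (Θ.w w) := funext fun w => (hΘ w).symm
        rw [ha2]
        exact (Jexp_relabel R hR c Θ).symm
      rw [Nat.card_of_isEmpty]
      norm_num
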